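/- The multiplicative monoid of all n×n complex matrices M_n(ℂ) is generated by the generalized elementary Jacobi matrices: the matrices I + t·E_{i,i+1}, I + t·E_{i+1,i} for 1 ≤ i ≤ n-1, and I + (t-1)·E_{i,i} for 1 ≤ i ≤ n, where t ranges over all of ℂ. -/

import Mathlib

open Matrix

section Aux

variable {n : ℕ}

private def S (n : ℕ) : Set (Matrix (Fin n) (Fin n) ℂ) :=
  {A : Matrix (Fin n) (Fin n) ℂ |
      (∃ (i j : Fin n) (t : ℂ), (j : ℕ) = (i : ℕ) + 1 ∧
        (A = 1 + Matrix.single i j t ∨ A = 1 + Matrix.single j i t)) ∨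
      (∃ (i : Fin n) (t : ℂ), A = 1 + Matrix.single i i (t - 1))}

private lemma ring_id {R : Type*} [Ring R] (A B : R) (hAA : A * A = 0) (hBB : B * B = 0)
    (hBA : B * A = 0) (hABA : A * B * A = 0) (hABB : A * B * B = 0) :
    (1 + A) * (1 + B) * (1 - A) * (1 - B) = 1 + A * B := by
  have h1 : (1 + A) * (1 + B) * (1 - A) =
      1 + B + A * B - (A * A + B * A + A * B * A) := by noncomm_ring
  rw [h1, hAA, hBA, hABA]
  have h2 : (1 + B + A * B - (0 + 0 + 0)) * (1 - B) =
      1 + A * B - (B * B + A * B * B) := by noncomm_ring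
  rw [h2, hBB, hABB]
  simp

private lemma commutator_id (i j k : Fin n) (hik : i ≠ k) (hkj : k ≠ j) (hij : i ≠ j)
    (a b : ℂ) :
    (1 + Matrix.single i k a) * (1 + Matrix.single k j b) *
      (1 + Matrix.single i k (-a)) * (1 + Matrix.single k j (-b)) =
      1 + Matrix.single i j (a * b) := by
  have e1 : (1 : Matrix (Fin n) (Fin n) ℂ) + Matrix.single i k (-a) =
      1 - Matrix.single i k a := by
    rw [sub_eq_add_neg]
    congr 1
    ext x y
    simp [Matrix.single]
    split <;> simp
  have e2 : (1 : Matrix (Fin n) (Fin n) ℂ) + Matrix.single k j (-b) =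
      1 - Matrix.single k j b := by
    rw [sub_eq_add_neg]
    congr 1
    ext x y
    simp [Matrix.single]
    split <;> simp
  rw [e1, e2]
  have := ring_id (Matrix.single i k a) (Matrix.single k j b)
    (Matrix.single_mul_single_of_ne _ _ _ _ (Ne.symm hik) a)
    (Matrix.single_mul_single_of_ne _ _ _ _ (Ne.symm hkj) b)
    (Matrix.single_mul_single_of_ne _ _ _ _ (Ne.symm hij) a)
    (by rw [Matrix.single_mul_single_same,
        Matrix.single_mul_single_of_ne _ _ _ _ (Ne.symm hij) a])
    (by rw [Matrix.single_mul_single_same,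
        Matrix.single_mul_single_of_ne _ _ _ _ (Ne.symm hkj) b])
  rw [this, Matrix.single_mul_single_same]

private lemma upper_mem (d : ℕ) : ∀ (i j : Fin n) (t : ℂ), (j : ℕ) = (i : ℕ) + d + 1 →
    (1 + Matrix.single i j t) ∈ Submonoid.closure (S n) := by
  induction d with
  | zero =>
    intro i j t h
    exact Submonoid.subset_closure (Or.inl ⟨i, j, t, by omega, Or.inl rfl⟩)
  | succ d ih =>
    intro i j t h
    have hk : (i : ℕ) + 1 < n := by have := j.isLt; omega
    set k : Fin n := ⟨(i : ℕ) + 1, hk⟩ with hkdef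
    have hik : i ≠ k := by intro hc; apply_fun (Fin.val) at hc; simp [hkdef] at hc
    have hkj : k ≠ j := by intro hc; apply_fun (Fin.val) at hc; simp [hkdef] at hc; omega
    have hij : i ≠ j := by intro hc; apply_fun (Fin.val) at hc; omega
    have hadj : ∀ c : ℂ, (1 + Matrix.single i k c) ∈ Submonoid.closure (S n) := fun c =>
      Submonoid.subset_closure (Or.inl ⟨i, k, c, by simp [hkdef], Or.inl rfl⟩)
    have hrec : ∀ c : ℂ, (1 + Matrix.single k j c) ∈ Submonoid.closure (S n) := fun c =>
      ih k j c (by simp [hkdef]; omega)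
    have := commutator_id i j k hik hkj hij t 1
    rw [mul_one] at this
    rw [← this]
    exact mul_mem (mul_mem (mul_mem (hadj t) (hrec 1)) (hadj (-t))) (hrec (-1))

private lemma lower_mem (d : ℕ) : ∀ (i j : Fin n) (t : ℂ), (i : ℕ) = (j : ℕ) + d + 1 →
    (1 + Matrix.single i j t) ∈ Submonoid.closure (S n) := by
  induction d with
  | zero =>
    intro i j t h
    exact Submonoid.subset_closure (Or.inl ⟨j, i, t, by omega, Or.inr rfl⟩)
  | succ d ih =>
    intro i j t h
    have hk : (j : ℕ) + 1 < n := by have := i.isLt; omega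
    set k : Fin n := ⟨(j : ℕ) + 1, hk⟩ with hkdef
    have hik : i ≠ k := by intro hc; apply_fun (Fin.val) at hc; simp [hkdef] at hc; omega
    have hkj : k ≠ j := by intro hc; apply_fun (Fin.val) at hc; simp [hkdef] at hc
    have hij : i ≠ j := by intro hc; apply_fun (Fin.val) at hc; omega
    have hadj : ∀ c : ℂ, (1 + Matrix.single k j c) ∈ Submonoid.closure (S n) := fun c =>
      Submonoid.subset_closure (Or.inl ⟨j, k, c, by simp [hkdef], Or.inr rfl⟩)
    have hrec : ∀ c : ℂ, (1 + Matrix.single i k c) ∈ Submonoid.closure (S n) := fun c =>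
      ih i k c (by simp [hkdef]; omega)
    have := commutator_id i j k hik hkj hij t 1
    rw [mul_one] at this
    rw [← this]
    exact mul_mem (mul_mem (mul_mem (hrec t) (hadj 1)) (hrec (-t))) (hadj (-1))

private lemma transvection_mem (i j : Fin n) (hij : i ≠ j) (t : ℂ) :
    (1 + Matrix.single i j t) ∈ Submonoid.closure (S n) := by
  rcases lt_or_gt_of_ne hij with h | h
  · obtain ⟨d, hd⟩ : ∃ d : ℕ, (j : ℕ) = (i : ℕ) + d + 1 :=
      ⟨(j : ℕ) - (i : ℕ) - 1, by have : (i : ℕ) < j := h; omega⟩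
    exact upper_mem d i j t hd
  · obtain ⟨d, hd⟩ : ∃ d : ℕ, (i : ℕ) = (j : ℕ) + d + 1 :=
      ⟨(i : ℕ) - (j : ℕ) - 1, by have : (j : ℕ) < i := h; omega⟩
    exact lower_mem d i j t hd

private lemma update_diag (i : Fin n) (c : ℂ) :
    Matrix.diagonal (Function.update (1 : Fin n → ℂ) i c) = 1 + Matrix.single i i (c - 1) := by
  ext x y
  by_cases hx : x = y
  · subst hx
    by_cases hxi : i = x
    · subst hxi; simp [Matrix.diagonal, Matrix.single]
    · simp [Matrix.diagonal, Matrix.single, Function.update_of_ne (Ne.symm hxi), hxi]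
  · simp only [Matrix.diagonal_apply_ne _ hx, Matrix.add_apply, Matrix.one_apply_ne hx,
      Matrix.single, of_apply, zero_add]
    rw [if_neg]
    rintro ⟨h1, h2⟩
    exact hx (h1 ▸ h2 ▸ rfl)

private lemma diagonal_mem (D : Fin n → ℂ) :
    (Matrix.diagonal D) ∈ Submonoid.closure (S n) := by
  have hD : D = ((List.finRange n).map fun i => Function.update (1 : Fin n → ℂ) i (D i)).prod := by
    rw [← Fin.prod_univ_def]
    funext j
    rw [Finset.prod_apply, Finset.prod_eq_single j
      (fun i _ hi => by simp [Function.update_of_ne (Ne.symm hi)]) (by simp)]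
    simp
  have key : Matrix.diagonal D =
      ((List.finRange n).map fun i =>
        Matrix.diagonal (Function.update (1 : Fin n → ℂ) i (D i))).prod := by
    calc Matrix.diagonal D = diagonalRingHom (Fin n) ℂ D := rfl
      _ = diagonalRingHom (Fin n) ℂ
            ((List.finRange n).map fun i => Function.update (1 : Fin n → ℂ) i (D i)).prod := by
          rw [← hD]
      _ = _ := by rw [map_list_prod]; simp [List.map_map, Function.comp]; rfl
  rw [key]
  refine list_prod_mem fun x hx => ?_
  simp only [List.mem_map] at hx
  obtain ⟨i, _, rfl⟩ := hx
  rw [update_diag]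
  exact Submonoid.subset_closure (Or.inr ⟨i, D i, rfl⟩)

end Aux

/-- The multiplicative monoid `M_n(ℂ)` is generated by the generalized elementary
Jacobi matrices `I + t·E_{i,i+1}`, `I + t·E_{i+1,i}` and `I + (t-1)·E_{i,i}`,
where `t` ranges over all of `ℂ`. -/
theorem stmt3 (n : ℕ) :
    Submonoid.closure {A : Matrix (Fin n) (Fin n) ℂ |
        (∃ (i j : Fin n) (t : ℂ), (j : ℕ) = (i : ℕ) + 1 ∧
          (A = 1 + Matrix.single i j t ∨ A = 1 + Matrix.single j i t)) ∨
        (∃ (i : Fin n) (t : ℂ), A = 1 + Matrix.single i i (t - 1))} = ⊤ := by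
  rw [eq_top_iff]
  rintro A -
  show A ∈ Submonoid.closure (S n)
  obtain ⟨L, L', D, hA⟩ := Matrix.Pivot.exists_list_transvec_mul_diagonal_mul_list_transvec A
  rw [hA]
  refine mul_mem (mul_mem ?_ (diagonal_mem D)) ?_
  · refine list_prod_mem fun x hx => ?_
    simp only [List.mem_map] at hx
    obtain ⟨ts, _, rfl⟩ := hx
    exact transvection_mem ts.i ts.j ts.hij ts.c
  · refine list_prod_mem fun x hx => ?_
    simp only [List.mem_map] at hx
    obtain ⟨ts, _, rfl⟩ := hx
    exact transvection_mem ts.i ts.j ts.hij ts.c
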